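/- The number of primitive square-zero elements of H² up to sign equals the number of indices j with α_j² = 0; precisely, the cardinality of the quotient of the set {z ∈ H² : z is primitive and z² = 0 in R_A} by the identification z ∼ −z is equal to the cardinality of the set {j ∈ {1,…,n} : α_j² = 0 in R_A}. -/

import Mathlib

/-!
Context: R_A := ℤ[x_1,…,x_n]/(x_j² − α_j x_j) with α_j = Σ_{i<j} A^i_j x_i.
The degree-2 part H² of R_A is the free abelian group with basis x_1,…,x_n;
an element of H² is primitive if the gcd of its coordinates is 1.

STATEMENT 3: The number of primitive square-zero elements of H² up to sign
equals the number of indices j with α_j² = 0; precisely, the cardinality of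
the quotient of the set {z ∈ H² : z primitive and z² = 0 in R_A} by the
identification z ∼ −z equals the cardinality of {j : α_j² = 0 in R_A}.
-/

open MvPolynomial

noncomputable section

def alphaP (n : ℕ) (A : Fin n → Fin n → ℤ) (j : Fin n) : MvPolynomial (Fin n) ℤ :=
  ∑ i ∈ Finset.univ.filter (· < j), C (A i j) * X i

def bottIdeal (n : ℕ) (A : Fin n → Fin n → ℤ) : Ideal (MvPolynomial (Fin n) ℤ) :=
  Ideal.span (Set.range fun j => X j ^ 2 - alphaP n A j * X j)

abbrev BottRing (n : ℕ) (A : Fin n → Fin n → ℤ) : Type :=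
  MvPolynomial (Fin n) ℤ ⧸ bottIdeal n A

/-- The image x_i of X i in R_A. -/
def bx (n : ℕ) (A : Fin n → Fin n → ℤ) (i : Fin n) : BottRing n A :=
  Ideal.Quotient.mk (bottIdeal n A) (X i)

/-- The image of α_j in R_A. -/
def balpha (n : ℕ) (A : Fin n → Fin n → ℤ) (j : Fin n) : BottRing n A :=
  Ideal.Quotient.mk (bottIdeal n A) (alphaP n A j)

/-- z is a primitive element of the degree-2 part H² of R_A. -/
def IsPrimitiveH2 (n : ℕ) (A : Fin n → Fin n → ℤ) (z : BottRing n A) : Prop :=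
  ∃ c : Fin n → ℤ, Finset.univ.gcd c = 1 ∧ z = ∑ i, c i • bx n A i

/-- The commutative ring ℤ[s,t]/(s², t² - A·s·t), free on 1, s, t, st. -/
structure Q4 (A : ℤ) where
  u : ℤ
  s : ℤ
  t : ℤ
  w : ℤ

namespace Q4

variable {A : ℤ}

@[ext] theorem ext' {x y : Q4 A} (hu : x.u = y.u) (hs : x.s = y.s)
    (ht : x.t = y.t) (hw : x.w = y.w) : x = y := by
  cases x; cases y; simp_all

instance : Add (Q4 A) := ⟨fun x y => ⟨x.u + y.u, x.s + y.s, x.t + y.t, x.w + y.w⟩⟩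
instance : Zero (Q4 A) := ⟨⟨0, 0, 0, 0⟩⟩
instance : Neg (Q4 A) := ⟨fun x => ⟨-x.u, -x.s, -x.t, -x.w⟩⟩
instance : One (Q4 A) := ⟨⟨1, 0, 0, 0⟩⟩
instance : Mul (Q4 A) :=
  ⟨fun x y => ⟨x.u * y.u, x.u * y.s + y.u * x.s, x.u * y.t + y.u * x.t,
    x.u * y.w + y.u * x.w + x.s * y.t + y.s * x.t + A * x.t * y.t⟩⟩

@[simp] lemma add_u (x y : Q4 A) : (x + y).u = x.u + y.u := rfl
@[simp] lemma add_s (x y : Q4 A) : (x + y).s = x.s + y.s := rfl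
@[simp] lemma add_t (x y : Q4 A) : (x + y).t = x.t + y.t := rfl
@[simp] lemma add_w (x y : Q4 A) : (x + y).w = x.w + y.w := rfl
@[simp] lemma zero_u : (0 : Q4 A).u = 0 := rfl
@[simp] lemma zero_s : (0 : Q4 A).s = 0 := rfl
@[simp] lemma zero_t : (0 : Q4 A).t = 0 := rfl
@[simp] lemma zero_w : (0 : Q4 A).w = 0 := rfl
@[simp] lemma neg_u (x : Q4 A) : (-x).u = -x.u := rfl
@[simp] lemma neg_s (x : Q4 A) : (-x).s = -x.s := rfl
@[simp] lemma neg_t (x : Q4 A) : (-x).t = -x.t := rfl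
@[simp] lemma neg_w (x : Q4 A) : (-x).w = -x.w := rfl
@[simp] lemma one_u : (1 : Q4 A).u = 1 := rfl
@[simp] lemma one_s : (1 : Q4 A).s = 0 := rfl
@[simp] lemma one_t : (1 : Q4 A).t = 0 := rfl
@[simp] lemma one_w : (1 : Q4 A).w = 0 := rfl
@[simp] lemma mul_u (x y : Q4 A) : (x * y).u = x.u * y.u := rfl
@[simp] lemma mul_s (x y : Q4 A) : (x * y).s = x.u * y.s + y.u * x.s := rfl
@[simp] lemma mul_t (x y : Q4 A) : (x * y).t = x.u * y.t + y.u * x.t := rfl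
@[simp] lemma mul_w (x y : Q4 A) :
    (x * y).w = x.u * y.w + y.u * x.w + x.s * y.t + y.s * x.t + A * x.t * y.t := rfl

instance : CommRing (Q4 A) where
  add_assoc x y z := by ext <;> simp <;> ring
  zero_add x := by ext <;> simp
  add_zero x := by ext <;> simp
  add_comm x y := by ext <;> simp <;> ring
  neg_add_cancel x := by ext <;> simp
  mul_assoc x y z := by ext <;> simp <;> ring
  one_mul x := by ext <;> simp
  mul_one x := by ext <;> simp
  left_distrib x y z := by ext <;> simp <;> ring
  right_distrib x y z := by ext <;> simp <;> ring
  mul_comm x y := by ext <;> simp <;> ring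
  zero_mul x := by ext <;> simp
  mul_zero x := by ext <;> simp
  nsmul := nsmulRec
  zsmul := zsmulRec

lemma intCast_eval (k : ℤ) : ((k : ℤ) : Q4 A) = ⟨k, 0, 0, 0⟩ := by
  induction k using Int.induction_on with
  | zero => simp; rfl
  | succ n ih => rw [Int.cast_add, Int.cast_one, ih]; ext <;> simp
  | pred n ih => rw [Int.cast_sub, Int.cast_one, ih]; ext <;> simp [sub_eq_add_neg]

@[simp] lemma smul_u (k : ℤ) (x : Q4 A) : (k • x).u = k * x.u := by
  rw [zsmul_eq_mul, intCast_eval]; simp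
@[simp] lemma smul_s (k : ℤ) (x : Q4 A) : (k • x).s = k * x.s := by
  rw [zsmul_eq_mul, intCast_eval]; simp
@[simp] lemma smul_t (k : ℤ) (x : Q4 A) : (k • x).t = k * x.t := by
  rw [zsmul_eq_mul, intCast_eval]; simp
@[simp] lemma smul_w (k : ℤ) (x : Q4 A) : (k • x).w = k * x.w := by
  rw [zsmul_eq_mul, intCast_eval]; simp

end Q4

namespace BottAux

variable {n : ℕ} (A : Fin n → Fin n → ℤ)

def S (a : ℤ) : Q4 a := ⟨0,1,0,0⟩
def T (a : ℤ) : Q4 a := ⟨0,0,1,0⟩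
def W (a : ℤ) : Q4 a := ⟨0,0,0,1⟩

def vpair (i₀ j₀ : Fin n) : Fin n → Q4 (A i₀ j₀) := fun i =>
  if i = i₀ then S _ else if i = j₀ then T _ else 0

/-- evaluation of polynomials at vpair -/
def epair (i₀ j₀ : Fin n) : MvPolynomial (Fin n) ℤ →+* Q4 (A i₀ j₀) :=
  eval₂Hom (Int.castRingHom _) (vpair A i₀ j₀)

lemma epair_alphaP (i₀ j₀ : Fin n) (j : Fin n) :
    epair A i₀ j₀ (alphaP n A j) =
      ∑ i ∈ Finset.univ.filter (· < j), (A i j : Q4 (A i₀ j₀)) * vpair A i₀ j₀ i := by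
  simp only [epair, alphaP, map_sum, map_mul, eval₂Hom_C, eval₂Hom_X, eval₂Hom_X']
  rfl

lemma epair_gen (i₀ j₀ : Fin n) (h : i₀ ≤ j₀) (j : Fin n) :
    epair A i₀ j₀ (X j ^ 2 - alphaP n A j * X j) = 0 := by
  have hX : epair A i₀ j₀ (X j) = vpair A i₀ j₀ j := by simp [epair]
  rw [map_sub, map_mul, map_pow, hX, epair_alphaP]
  by_cases hji : j = i₀
  · subst hji
    have : ∀ i ∈ Finset.univ.filter (· < j), (A i j : Q4 (A j j₀)) * vpair A j j₀ i = 0 := by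
      intro i hi
      simp only [Finset.mem_filter] at hi
      have h1 : i ≠ j := ne_of_lt hi.2
      have h2 : i ≠ j₀ := ne_of_lt (lt_of_lt_of_le hi.2 h)
      simp [vpair, h1, h2]
    rw [Finset.sum_eq_zero this]
    simp [vpair, S]
    ext <;> simp [pow_two]
  · by_cases hjj : j = j₀
    · subst hjj
      have hlt : i₀ < j := lt_of_le_of_ne h (Ne.symm hji)
      have hv : vpair A i₀ j j = T _ := by simp [vpair, hji]
      rw [hv]
      rw [Finset.sum_eq_single i₀]
      · have : vpair A i₀ j i₀ = S _ := by simp [vpair]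
        rw [this, Q4.intCast_eval]
        ext <;> simp [S, T, pow_two, sub_eq_add_neg]
      · intro i hi hne
        simp only [Finset.mem_filter] at hi
        have h2 : i ≠ j := ne_of_lt hi.2
        simp [vpair, hne, h2]
      · intro hni
        simp [Finset.mem_filter, hlt] at hni
    · have hv : vpair A i₀ j₀ j = 0 := by simp [vpair, hji, hjj]
      rw [hv]
      ext <;> simp [pow_two]

/-- the induced hom on the Bott ring -/
def fpair (i₀ j₀ : Fin n) (h : i₀ ≤ j₀) : BottRing n A →+* Q4 (A i₀ j₀) :=
  Ideal.Quotient.lift _ (epair A i₀ j₀) (by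
    have hle : bottIdeal n A ≤ RingHom.ker (epair A i₀ j₀) := by
      rw [bottIdeal, Ideal.span_le]
      rintro q ⟨j, rfl⟩
      exact RingHom.mem_ker.mpr (epair_gen A i₀ j₀ h j)
    intro p hp
    exact RingHom.mem_ker.mp (hle hp))

lemma fpair_bx (i₀ j₀ : Fin n) (h : i₀ ≤ j₀) (i : Fin n) :
    fpair A i₀ j₀ h (bx n A i) = vpair A i₀ j₀ i := by
  simp [fpair, bx, epair]

/-- degree-2 coefficient extraction -/
lemma D2 (c : Fin n → ℤ) (hc : (∑ i, c i • bx n A i) = 0) : ∀ i₀, c i₀ = 0 := by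
  intro i₀
  have := congrArg (fpair A i₀ i₀ le_rfl) hc
  rw [map_sum, map_zero] at this
  simp only [map_zsmul, fpair_bx] at this
  rw [Finset.sum_eq_single i₀] at this
  · have hv : vpair A i₀ i₀ i₀ = S _ := by simp [vpair]
    rw [hv] at this
    have := congrArg Q4.s this
    simpa [S, Q4.intCast_eval] using this
  · intro i _ hne
    simp [vpair, hne]
  · simp
/-- degree-4 coefficient extraction -/
lemma D4 (m : Fin n → Fin n → ℤ)
    (hm : (∑ j, ∑ i ∈ Finset.univ.filter (· < j), m i j • (bx n A i * bx n A j)) = 0) :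
    ∀ i₀ j₀, i₀ < j₀ → m i₀ j₀ = 0 := by
  intro i₀ j₀ hlt
  have := congrArg (fpair A i₀ j₀ hlt.le) hm
  rw [map_sum, map_zero] at this
  simp only [map_sum, map_zsmul, map_mul, fpair_bx] at this
  rw [Finset.sum_eq_single j₀] at this
  · rw [Finset.sum_eq_single i₀] at this
    · have h1 : vpair A i₀ j₀ i₀ = S _ := by simp [vpair]
      have h2 : vpair A i₀ j₀ j₀ = T _ := by simp [vpair, ne_of_gt hlt]
      rw [h1, h2] at this
      have := congrArg Q4.w this
      simpa [S, T, Q4.intCast_eval] using this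
    · intro i hi hne
      simp only [Finset.mem_filter] at hi
      have h2 : i ≠ j₀ := ne_of_lt hi.2
      simp [vpair, hne, h2]
    · intro hni
      simp [Finset.mem_filter, hlt] at hni
  · intro j _ hne
    by_cases hji : j = i₀
    · subst hji
      apply Finset.sum_eq_zero
      intro i hi
      simp only [Finset.mem_filter] at hi
      have h1 : i ≠ j := ne_of_lt hi.2
      have h2 : i ≠ j₀ := ne_of_lt (hi.2.trans hlt)
      simp [vpair, h1, h2]
    · apply Finset.sum_eq_zero
      intro i hi
      have hv : vpair A i₀ j₀ j = 0 := by simp [vpair, hji, hne]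
      simp [hv]
  · simp


lemma bx_sq (j : Fin n) : bx n A j ^ 2 = balpha n A j * bx n A j := by
  have hmem : X j ^ 2 - alphaP n A j * X j ∈ bottIdeal n A :=
    Ideal.subset_span ⟨j, rfl⟩
  have h0 : Ideal.Quotient.mk (bottIdeal n A) (X j ^ 2 - alphaP n A j * X j) = 0 :=
    Ideal.Quotient.eq_zero_iff_mem.mpr hmem
  rw [map_sub, map_mul, sub_eq_zero] at h0
  rw [bx, balpha, ← map_pow]
  exact h0

lemma balpha_eq (j : Fin n) :
    balpha n A j = ∑ i ∈ Finset.univ.filter (· < j), A i j • bx n A i := by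
  rw [balpha, alphaP, map_sum]
  refine Finset.sum_congr rfl fun i _ => ?_
  rw [map_mul, bx, zsmul_eq_mul]
  congr 1

/-- square-zero condition on coefficient vectors -/
def SqCond (c : Fin n → ℤ) : Prop :=
  ∀ i j : Fin n, i < j → c j * (c j * A i j + 2 * c i) = 0

/-- swap lemma for sums over pairs i < j -/
lemma sum_swap_lt {M : Type*} [AddCommMonoid M] (h : Fin n → Fin n → M) :
    ∑ j : Fin n, ∑ i ∈ Finset.univ.filter (j < ·), h i j
      = ∑ j : Fin n, ∑ i ∈ Finset.univ.filter (· < j), h j i := by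
  have e1 : ∀ j : Fin n, ∑ i ∈ Finset.univ.filter (j < ·), h i j
      = ∑ i : Fin n, if j < i then h i j else 0 := fun j =>
    (Finset.sum_filter _ _)
  have e2 : ∀ i : Fin n, ∑ j ∈ Finset.univ.filter (· < i), h i j
      = ∑ j : Fin n, if j < i then h i j else 0 := fun i =>
    (Finset.sum_filter _ _)
  simp only [e1]
  rw [Finset.sum_comm]
  refine Finset.sum_congr rfl fun i _ => ?_
  rw [← e2 i]

lemma double_sum_split {M : Type*} [AddCommMonoid M] (g : Fin n → Fin n → M)
    (hsym : ∀ i j, g i j = g j i) :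
    ∑ j : Fin n, ∑ i : Fin n, g i j
      = (∑ j : Fin n, ∑ i ∈ Finset.univ.filter (· < j), (g i j + g i j)) + ∑ i : Fin n, g i i := by
  have split : ∀ j : Fin n, ∑ i : Fin n, g i j
      = (∑ i ∈ Finset.univ.filter (· < j), g i j)
        + ((∑ i ∈ Finset.univ.filter (j < ·), g i j) + g j j) := by
    intro j
    rw [← Finset.sum_filter_add_sum_filter_not Finset.univ (· < j) (g · j)]
    congr 1
    have : Finset.univ.filter (fun i => ¬ i < j)
        = insert j (Finset.univ.filter (j < ·)) := by
      ext i
      simp only [Finset.mem_filter, Finset.mem_univ, true_and, Finset.mem_insert, not_lt]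
      constructor
      · intro hle
        rcases eq_or_lt_of_le hle with h' | h'
        · exact Or.inl h'.symm
        · exact Or.inr (by simpa using h')
      · rintro (rfl | h')
        · exact le_refl _
        · exact le_of_lt h'
    rw [this, Finset.sum_insert (by simp)]
    rw [add_comm (g j j)]
  rw [Finset.sum_congr rfl fun j _ => split j]
  rw [Finset.sum_add_distrib, Finset.sum_add_distrib]
  rw [sum_swap_lt (fun i j => g i j)]
  simp only [Finset.sum_add_distrib]
  have : ∀ j : Fin n, ∑ i ∈ Finset.univ.filter (· < j), g j i
      = ∑ i ∈ Finset.univ.filter (· < j), g i j := by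
    intro j; exact Finset.sum_congr rfl fun i _ => hsym j i
  rw [Finset.sum_congr rfl fun j _ => this j]
  abel

/-- expansion of the square of a degree-2 element -/
lemma sq_expand (c : Fin n → ℤ) :
    (∑ i, c i • bx n A i) ^ 2
      = ∑ j : Fin n, ∑ i ∈ Finset.univ.filter (· < j),
          (c j * (c j * A i j + 2 * c i)) • (bx n A i * bx n A j) := by
  have h1 : (∑ i, c i • bx n A i) ^ 2
      = ∑ j : Fin n, ∑ i : Fin n, (c i * c j) • (bx n A i * bx n A j) := by
    rw [pow_two, Finset.sum_mul_sum]
    refine Finset.sum_congr rfl fun i _ => Finset.sum_congr rfl fun j _ => ?_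
    rw [smul_mul_smul_comm, mul_comm (c j) (c i), mul_comm (bx n A j) (bx n A i)]
  rw [h1, double_sum_split (fun i j => (c i * c j) • (bx n A i * bx n A j))
    (by intro i j; rw [mul_comm (c i), mul_comm (bx n A i)])]
  have hdiag : ∀ i : Fin n, (c i * c i) • (bx n A i * bx n A i)
      = ∑ k ∈ Finset.univ.filter (· < i), ((c i * c i) * A k i) • (bx n A k * bx n A i) := by
    intro i
    rw [← pow_two (bx n A i), bx_sq, balpha_eq, Finset.sum_mul, Finset.smul_sum]
    refine Finset.sum_congr rfl fun k _ => ?_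
    rw [smul_mul_assoc, smul_smul]
  rw [Finset.sum_congr rfl fun i _ => hdiag i, ← Finset.sum_add_distrib]
  refine Finset.sum_congr rfl fun j _ => ?_
  rw [← Finset.sum_add_distrib]
  refine Finset.sum_congr rfl fun i _ => ?_
  rw [← add_smul, ← add_smul]
  congr 1
  ring


lemma sq_zero_iff (c : Fin n → ℤ) :
    (∑ i, c i • bx n A i) ^ 2 = 0 ↔ SqCond A c := by
  rw [sq_expand]
  constructor
  · intro h i j hij
    exact D4 A (fun i j => c j * (c j * A i j + 2 * c i)) h i j hij
  · intro h
    refine Finset.sum_eq_zero fun j _ => Finset.sum_eq_zero fun i hi => ?_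
    simp only [Finset.mem_filter] at hi
    rw [h i j hi.2, zero_smul]

/-- coefficient vector of α_j -/
def cAl (j : Fin n) : Fin n → ℤ := fun i => if i < j then A i j else 0

lemma balpha_eq' (j : Fin n) : balpha n A j = ∑ i, cAl A j i • bx n A i := by
  rw [balpha_eq]
  rw [Finset.sum_filter]
  refine Finset.sum_congr rfl fun i _ => ?_
  by_cases h : i < j <;> simp [cAl, h]

/-- the condition on a column of A for α_j² = 0 -/
def Good (j : Fin n) : Prop :=
  ∀ i k : Fin n, i < k → k < j → A k j * (A k j * A i k + 2 * A i j) = 0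

lemma sqCond_cAl_iff (j : Fin n) : SqCond A (cAl A j) ↔ Good A j := by
  constructor
  · intro h i k hik hkj
    have := h i k hik
    simp only [cAl, if_pos hkj, if_pos (hik.trans hkj)] at this
    exact this
  · intro h i k hik
    by_cases hkj : k < j
    · have hij : i < j := hik.trans hkj
      simp only [cAl, if_pos hkj, if_pos hij]
      exact h i k hik hkj
    · simp [cAl, hkj]

lemma balpha_sq_zero_iff (j : Fin n) : balpha n A j ^ 2 = 0 ↔ Good A j := by
  rw [balpha_eq', sq_zero_iff, sqCond_cAl_iff]

/-- uniqueness of degree-2 coefficients -/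
lemma rep_unique (c c' : Fin n → ℤ)
    (h : (∑ i, c i • bx n A i) = ∑ i, c' i • bx n A i) : c = c' := by
  have hz : (∑ i, (c i - c' i) • bx n A i) = 0 := by
    simp only [sub_smul, Finset.sum_sub_distrib, h, sub_self]
  funext i
  have := D2 A (fun i => c i - c' i) hz i
  omega


def supp (c : Fin n → ℤ) : Finset (Fin n) := Finset.univ.filter (fun i => c i ≠ 0)

lemma supp_nonempty {c : Fin n → ℤ} (hc : c ≠ 0) : (supp c).Nonempty := by
  rw [supp, Finset.filter_nonempty_iff]
  by_contra h
  push_neg at h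
  exact hc (funext fun i => h i (Finset.mem_univ i))

/-- the largest index in the support -/
noncomputable def top (c : Fin n → ℤ) (hc : c ≠ 0) : Fin n :=
  (supp c).max' (supp_nonempty hc)

lemma top_ne_zero (c : Fin n → ℤ) (hc : c ≠ 0) : c (top c hc) ≠ 0 := by
  have := (supp c).max'_mem (supp_nonempty hc)
  exact (Finset.mem_filter.mp this).2

lemma top_spec (c : Fin n → ℤ) (hc : c ≠ 0) {k : Fin n} (hk : top c hc < k) : c k = 0 := by
  by_contra h
  have : k ∈ supp c := by simp [supp, h]
  exact absurd (Finset.le_max' _ _ this) (not_le_of_gt hk)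

lemma top_eq (c : Fin n → ℤ) (hc : c ≠ 0) {j : Fin n} (h0 : c j ≠ 0)
    (hgt : ∀ k, j < k → c k = 0) : top c hc = j := by
  apply le_antisymm
  · apply Finset.max'_le
    intro k hk
    simp only [supp, Finset.mem_filter] at hk
    by_contra h
    exact hk.2 (hgt k (lt_of_not_ge h))
  · exact Finset.le_max' _ _ (by simp [supp, h0])

lemma gcd_one_ne_zero {c : Fin n → ℤ} (hg : Finset.univ.gcd c = 1) : c ≠ 0 := by
  rintro rfl
  rw [show Finset.univ.gcd (0 : Fin n → ℤ) = 0 from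
    Finset.gcd_eq_zero_iff.mpr fun i _ => rfl] at hg
  exact absurd hg (by norm_num)

/-- half of the square-zero relation at the top index -/
lemma rel_at_top {c : Fin n → ℤ} (hc : c ≠ 0) (hsq : SqCond A c)
    {i : Fin n} (hi : i < top c hc) :
    2 * c i + c (top c hc) * A i (top c hc) = 0 := by
  have h := hsq i (top c hc) hi
  rcases mul_eq_zero.mp h with h' | h'
  · exact absurd h' (top_ne_zero c hc)
  · linarith [h']

lemma KEY1 {c : Fin n → ℤ} (hc : c ≠ 0) (hsq : SqCond A c) : Good A (top c hc) := by
  set j := top c hc with hj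
  intro i k hik hkj
  have hij : i < j := hik.trans hkj
  have hrk := rel_at_top A hc hsq hkj
  have hri := rel_at_top A hc hsq hij
  have hu : c j ≠ 0 := top_ne_zero c hc
  rcases mul_eq_zero.mp (hsq i k hik) with h0 | hinner
  · -- c k = 0, hence A k j = 0
    have : c j * A k j = 0 := by linarith
    rcases mul_eq_zero.mp this with h | h
    · exact absurd h hu
    · rw [h]; ring
  · have key : -(c j) * (A k j * A i k + 2 * A i j) = 0 := by
      linear_combination 2 * hinner - A i k * hrk - 2 * hri
    rcases mul_eq_zero.mp key with h | h
    · exact absurd (neg_eq_zero.mp h) hu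
    · rw [h]; ring

lemma KEY2 {c c' : Fin n → ℤ} (hg : Finset.univ.gcd c = 1) (hg' : Finset.univ.gcd c' = 1)
    (hsq : SqCond A c) (hsq' : SqCond A c')
    (htop : top c (gcd_one_ne_zero hg) = top c' (gcd_one_ne_zero hg')) :
    c' = c ∨ c' = -c := by
  have hc := gcd_one_ne_zero hg
  have hc' := gcd_one_ne_zero hg'
  set j := top c hc with hj
  have hu : c j ≠ 0 := top_ne_zero c hc
  have hu' : c' j ≠ 0 := htop ▸ top_ne_zero c' hc'
  have claim : ∀ i, c' j * c i = c j * c' i := by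
    intro i
    rcases lt_trichotomy i j with h | h | h
    · have h1 := rel_at_top A hc hsq (hj ▸ h)
      have h2 := rel_at_top A hc' hsq' (htop ▸ h : i < top c' hc')
      rw [← htop] at h2
      have : 2 * (c' j * c i) = 2 * (c j * c' i) := by
        linear_combination c' j * h1 - c j * h2
      omega
    · subst h; ring
    · rw [top_spec c hc (hj ▸ h), top_spec c' hc' (htop ▸ h : top c' hc' < i)]
      ring
  have habs : |c' j| = |c j| := by
    have e1 : Finset.univ.gcd (fun i => c' j * c i) = normalize (c' j) := by
      rw [Finset.gcd_mul_left, hg, mul_one]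
    have e2 : Finset.univ.gcd (fun i => c j * c' i) = normalize (c j) := by
      rw [Finset.gcd_mul_left, hg', mul_one]
    have : (fun i => c' j * c i) = (fun i => c j * c' i) := funext claim
    rw [Int.abs_eq_normalize, Int.abs_eq_normalize, ← e1, ← e2, this]
  rcases abs_eq_abs.mp habs with h | h
  · left
    funext i
    have := claim i
    rw [h] at this
    exact (mul_left_cancel₀ hu this).symm
  · right
    funext i
    have := claim i
    rw [h] at this
    have : c j * (- c i) = c j * c' i := by linarith
    simpa using (mul_left_cancel₀ hu this).symm

lemma KEY3 {j : Fin n} (hj : Good A j) :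
    ∃ c : Fin n → ℤ, Finset.univ.gcd c = 1 ∧ SqCond A c ∧ c j ≠ 0 ∧ ∀ k, j < k → c k = 0 := by
  by_cases hev : ∀ i, i < j → Even (A i j)
  · refine ⟨fun i => if i < j then -(A i j / 2) else if i = j then 1 else 0, ?_, ?_, ?_, ?_⟩
    · -- gcd = 1 since c j = 1
      have hdvd : Finset.univ.gcd (fun i => if i < j then -(A i j / 2) else if i = j then 1 else 0) ∣ (1 : ℤ) := by
        have := Finset.gcd_dvd (s := Finset.univ)
          (f := fun i => if i < j then -(A i j / 2) else if i = j then 1 else 0) (Finset.mem_univ j)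
        simpa [lt_irrefl] using this
      have hnn : 0 ≤ Finset.univ.gcd (fun i => if i < j then -(A i j / 2) else if i = j then 1 else 0) :=
        Int.nonneg_of_normalize_eq_self Finset.normalize_gcd
      rcases Int.isUnit_iff.mp (isUnit_of_dvd_one hdvd) with h | h
      · exact h
      · omega
    · intro i k hik
      by_cases hkj : k < j
      · have hij : i < j := hik.trans hkj
        simp only [if_pos hkj, if_pos hij]
        obtain ⟨p, hp⟩ := hev k hkj
        obtain ⟨q, hq⟩ := hev i hij
        have h0 := hj i k hik hkj
        rw [hp, hq] at h0 ⊢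
        have hp2 : (p + p) / 2 = p := by omega
        have hq2 : (q + q) / 2 = q := by omega
        rw [hp2, hq2]
        have h4 : 4 * (-p * (-p * A i k + 2 * -q)) = (p + p) * ((p + p) * A i k + 2 * (q + q)) := by
          ring
        rw [h0] at h4
        linarith
      · by_cases hkk : k = j
        · subst hkk
          have hij : i < k := hik
          dsimp only
          rw [if_neg hkj, if_pos rfl, if_pos hij]
          obtain ⟨q, hq⟩ := hev i hij
          omega
        · simp [if_neg hkj, if_neg hkk]
    · simp [lt_irrefl]
    · intro k hk
      simp [not_lt_of_gt hk, ne_of_gt hk]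
  · push_neg at hev
    obtain ⟨i₀, hi₀, hodd⟩ := hev
    rw [Int.not_even_iff_odd] at hodd
    refine ⟨fun i => if i < j then -(A i j) else if i = j then 2 else 0, ?_, ?_, ?_, ?_⟩
    · set g := Finset.univ.gcd (fun i => if i < j then -(A i j) else if i = j then 2 else 0) with hgdef
      have hd2 : g ∣ 2 := by
        have := Finset.gcd_dvd (s := Finset.univ)
          (f := fun i => if i < j then -(A i j) else if i = j then 2 else 0) (Finset.mem_univ j)
        simpa [lt_irrefl] using this
      have hdA : g ∣ A i₀ j := by
        have := Finset.gcd_dvd (s := Finset.univ)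
          (f := fun i => if i < j then -(A i j) else if i = j then 2 else 0) (Finset.mem_univ i₀)
        simp only [hi₀, if_pos] at this
        exact (dvd_neg.mp this)
      have hnn : 0 ≤ g := Int.nonneg_of_normalize_eq_self Finset.normalize_gcd
      have hle : g ≤ 2 := Int.le_of_dvd (by norm_num) hd2
      have hne : g ≠ 0 := by
        intro h
        rw [h] at hdA
        rw [zero_dvd_iff] at hdA
        simp [hdA] at hodd
      have hne2 : g ≠ 2 := by
        intro h
        rw [h] at hdA
        exact (Int.not_odd_iff_even.mpr (even_iff_two_dvd.mpr hdA)) hodd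
      omega
    · intro i k hik
      by_cases hkj : k < j
      · have hij : i < j := hik.trans hkj
        simp only [if_pos hkj, if_pos hij]
        linear_combination hj i k hik hkj
      · by_cases hkk : k = j
        · subst hkk
          dsimp only
          rw [if_neg hkj, if_pos rfl, if_pos hik]
          ring
        · simp [if_neg hkj, if_neg hkk]
    · simp [lt_irrefl]
    · intro k hk
      simp [not_lt_of_gt hk, ne_of_gt hk]


lemma top_congr {c c' : Fin n → ℤ} (h : c = c') (hc : c ≠ 0) (hc' : c' ≠ 0) :
    top c hc = top c' hc' := by subst h; rfl

lemma top_neg {c : Fin n → ℤ} (hc : c ≠ 0) (hc' : (-c) ≠ 0) :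
    top (-c) hc' = top c hc := by
  apply top_eq
  · simpa using top_ne_zero c hc
  · intro k hk
    simpa using top_spec c hc hk

end BottAux

theorem card_primitive_square_zero_up_to_sign (n : ℕ) (hn : 1 ≤ n)
    (A : Fin n → Fin n → ℤ) :
    Nat.card (Quot fun (z w : {z : BottRing n A // IsPrimitiveH2 n A z ∧ z ^ 2 = 0}) =>
        z.1 = w.1 ∨ z.1 = -w.1)
      = Nat.card {j : Fin n // balpha n A j ^ 2 = 0} := by
  classical
  set Z := {z : BottRing n A // IsPrimitiveH2 n A z ∧ z ^ 2 = 0} with hZ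
  have hex : ∀ z : Z, ∃ c : Fin n → ℤ, Finset.univ.gcd c = 1 ∧ z.1 = ∑ i, c i • bx n A i :=
    fun z => z.2.1
  choose cf hgcd hrep using hex
  have hsq : ∀ z : Z, BottAux.SqCond A (cf z) := by
    intro z
    rw [← BottAux.sq_zero_iff, ← hrep z]
    exact z.2.2
  have hcne : ∀ z : Z, cf z ≠ 0 := fun z => BottAux.gcd_one_ne_zero (hgcd z)
  let g : Z → {j : Fin n // balpha n A j ^ 2 = 0} := fun z =>
    ⟨BottAux.top (cf z) (hcne z),
      (BottAux.balpha_sq_zero_iff A _).mpr (BottAux.KEY1 A (hcne z) (hsq z))⟩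
  have hcfneg : ∀ z w : Z, z.1 = -w.1 → cf z = -cf w := by
    intro z w h
    apply BottAux.rep_unique A
    rw [← hrep z, h, hrep w, ← Finset.sum_neg_distrib]
    exact Finset.sum_congr rfl fun i _ => by simp
  have hconst : ∀ z w : Z, (z.1 = w.1 ∨ z.1 = -w.1) → g z = g w := by
    intro z w h
    apply Subtype.ext
    show BottAux.top (cf z) (hcne z) = BottAux.top (cf w) (hcne w)
    rcases h with h | h
    · have hcc : cf z = cf w := BottAux.rep_unique A _ _ (by rw [← hrep z, ← hrep w, h])
      exact BottAux.top_congr hcc _ _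
    · have hcc : cf z = -cf w := hcfneg z w h
      rw [BottAux.top_congr hcc (hcne z) (by rw [← hcc]; exact hcne z)]
      exact BottAux.top_neg (hcne w) _
  let G : Quot (fun (z w : Z) => z.1 = w.1 ∨ z.1 = -w.1) → {j : Fin n // balpha n A j ^ 2 = 0} :=
    Quot.lift g hconst
  have hGinj : Function.Injective G := by
    intro a b
    induction a using Quot.ind with | _ z =>
    induction b using Quot.ind with | _ w =>
    intro h
    have htop : BottAux.top (cf z) (hcne z) = BottAux.top (cf w) (hcne w) := by
      have h' : g z = g w := h
      exact congrArg Subtype.val h'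
    apply Quot.sound
    rcases BottAux.KEY2 A (hgcd w) (hgcd z) (hsq w) (hsq z) htop.symm with hcc | hcc
    · left
      rw [hrep z, hrep w, hcc]
    · right
      rw [hrep z, hrep w, hcc, ← Finset.sum_neg_distrib]
      exact Finset.sum_congr rfl fun i _ => by simp
  have hGsurj : Function.Surjective G := by
    rintro ⟨j, hj⟩
    obtain ⟨c, hg1, hsqc, hcj, hgt⟩ := BottAux.KEY3 A ((BottAux.balpha_sq_zero_iff A j).mp hj)
    set z : Z := ⟨∑ i, c i • bx n A i, ⟨c, hg1, rfl⟩, (BottAux.sq_zero_iff A c).mpr hsqc⟩ with hzdef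
    refine ⟨Quot.mk _ z, ?_⟩
    have hred : G (Quot.mk _ z) = g z := rfl
    rw [hred]
    apply Subtype.ext
    show BottAux.top (cf z) (hcne z) = j
    have hcc : cf z = c := BottAux.rep_unique A _ _ (hrep z).symm
    rw [BottAux.top_congr hcc (hcne z) (by rw [← hcc]; exact hcne z)]
    exact BottAux.top_eq c _ hcj hgt
  exact Nat.card_eq_of_bijective G ⟨hGinj, hGsurj⟩


end
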